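/- For every z' ∈ ℝ^d with |z'| ≤ C: d_TV(ρ_{z'}, π_{z'}) ≤ (1/γ) · exp(2(BC + R)/γ) · sup_{a∈𝒜} |(f(a) − g(a))·z'|. -/

import Mathlib

open MeasureTheory
open scoped RealInnerProductSpace

/-- The Gibbs probability density `π_z(a) ∝ exp((f(a)·z + r(a))/γ)` on the set `𝒜`. -/
noncomputable def gibbs {m d : ℕ} (𝒜 : Set (EuclideanSpace ℝ (Fin m))) (γ : ℝ)
    (f : EuclideanSpace ℝ (Fin m) → EuclideanSpace ℝ (Fin d))
    (r : EuclideanSpace ℝ (Fin m) → ℝ)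
    (z : EuclideanSpace ℝ (Fin d)) (a : EuclideanSpace ℝ (Fin m)) : ℝ :=
  Real.exp ((⟪f a, z⟫ + r a) / γ) /
    ∫ a' in 𝒜, Real.exp ((⟪f a', z⟫ + r a') / γ)

/-- Total variation distance between two densities on `𝒜`:
`d_TV(p,q) = sup_{A ⊆ 𝒜 measurable} |∫_A p − ∫_A q|`. -/
noncomputable def dTV {m : ℕ} (𝒜 : Set (EuclideanSpace ℝ (Fin m)))
    (p q : EuclideanSpace ℝ (Fin m) → ℝ) : ℝ :=
  ⨆ A : {A : Set (EuclideanSpace ℝ (Fin m)) // MeasurableSet A ∧ A ⊆ 𝒜},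
    |(∫ a in A.1, p a) - ∫ a in A.1, q a|

lemma tv_bound {α : Type*} [MeasurableSpace α] (μ : Measure α) (𝒜 A : Set α) (φ ψ : α → ℝ)
    (h𝒜 : MeasurableSet 𝒜) (hA : MeasurableSet A) (hA𝒜 : A ⊆ 𝒜)
    (hintφ : IntegrableOn φ 𝒜 μ) (hintψ : IntegrableOn ψ 𝒜 μ)
    (hφ0 : ∀ a, 0 ≤ φ a) (hψ0 : ∀ a, 0 ≤ ψ a)
    (hZφ : 0 < ∫ a in 𝒜, φ a ∂μ) (hZψ : 0 < ∫ a in 𝒜, ψ a ∂μ) :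
    |(∫ a in A, ψ a ∂μ) / (∫ a in 𝒜, ψ a ∂μ) - (∫ a in A, φ a ∂μ) / (∫ a in 𝒜, φ a ∂μ)|
      ≤ (∫ a in 𝒜, |ψ a - φ a| ∂μ) / (∫ a in 𝒜, ψ a ∂μ) := by
  have hB : MeasurableSet (𝒜 \ A) := h𝒜.diff hA
  have hintφA : IntegrableOn φ A μ := hintφ.mono_set hA𝒜
  have hintφB : IntegrableOn φ (𝒜 \ A) μ := hintφ.mono_set Set.diff_subset
  have hintψA : IntegrableOn ψ A μ := hintψ.mono_set hA𝒜
  have hintψB : IntegrableOn ψ (𝒜 \ A) μ := hintψ.mono_set Set.diff_subset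
  have hsplitφ : ∫ a in 𝒜, φ a ∂μ = (∫ a in A, φ a ∂μ) + ∫ a in 𝒜 \ A, φ a ∂μ := by
    rw [← setIntegral_union disjoint_sdiff_self_right hB hintφA hintφB,
      Set.union_diff_cancel hA𝒜]
  have hsplitψ : ∫ a in 𝒜, ψ a ∂μ = (∫ a in A, ψ a ∂μ) + ∫ a in 𝒜 \ A, ψ a ∂μ := by
    rw [← setIntegral_union disjoint_sdiff_self_right hB hintψA hintψB,
      Set.union_diff_cancel hA𝒜]
  have hiA : IntegrableOn (fun a => |ψ a - φ a|) A μ := (hintψA.sub hintφA).abs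
  have hiB : IntegrableOn (fun a => |ψ a - φ a|) (𝒜 \ A) μ := (hintψB.sub hintφB).abs
  have hDsplit : ∫ a in 𝒜, |ψ a - φ a| ∂μ
      = (∫ a in A, |ψ a - φ a| ∂μ) + ∫ a in 𝒜 \ A, |ψ a - φ a| ∂μ := by
    rw [← setIntegral_union disjoint_sdiff_self_right hB hiA hiB, Set.union_diff_cancel hA𝒜]
  have habsA : |(∫ a in A, ψ a ∂μ) - ∫ a in A, φ a ∂μ| ≤ ∫ a in A, |ψ a - φ a| ∂μ := by
    rw [← integral_sub hintψA hintφA]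
    simpa [Real.norm_eq_abs] using
      norm_integral_le_integral_norm (μ := μ.restrict A) (fun a => ψ a - φ a)
  have habsB : |(∫ a in 𝒜 \ A, ψ a ∂μ) - ∫ a in 𝒜 \ A, φ a ∂μ|
      ≤ ∫ a in 𝒜 \ A, |ψ a - φ a| ∂μ := by
    rw [← integral_sub hintψB hintφB]
    simpa [Real.norm_eq_abs] using
      norm_integral_le_integral_norm (μ := μ.restrict (𝒜 \ A)) (fun a => ψ a - φ a)
  have hIAnn : 0 ≤ ∫ a in A, φ a ∂μ := setIntegral_nonneg hA fun a _ => hφ0 a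
  have hIBnn : 0 ≤ ∫ a in 𝒜 \ A, φ a ∂μ := setIntegral_nonneg hB fun a _ => hφ0 a
  have hDAnn : 0 ≤ ∫ a in A, |ψ a - φ a| ∂μ := setIntegral_nonneg hA fun a _ => abs_nonneg _
  have hDBnn : 0 ≤ ∫ a in 𝒜 \ A, |ψ a - φ a| ∂μ :=
    setIntegral_nonneg hB fun a _ => abs_nonneg _
  obtain ⟨hA1, hA2⟩ := abs_le.1 habsA
  obtain ⟨hB1, hB2⟩ := abs_le.1 habsB
  have key : |(∫ a in A, ψ a ∂μ) * (∫ a in 𝒜, φ a ∂μ)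
      - (∫ a in 𝒜, ψ a ∂μ) * (∫ a in A, φ a ∂μ)|
      ≤ (∫ a in 𝒜, |ψ a - φ a| ∂μ) * (∫ a in 𝒜, φ a ∂μ) := by
    rw [hsplitφ, hsplitψ, hDsplit, abs_le]
    constructor <;>
      nlinarith [mul_le_mul_of_nonneg_left hA2 hIBnn, mul_le_mul_of_nonneg_left hA1 hIBnn,
        mul_le_mul_of_nonneg_left hB2 hIAnn, mul_le_mul_of_nonneg_left hB1 hIAnn,
        mul_nonneg hIAnn hDAnn, mul_nonneg hIBnn hDBnn, mul_nonneg hIAnn hDBnn,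
        mul_nonneg hIBnn hDAnn]
  rw [div_sub_div _ _ hZψ.ne' hZφ.ne', abs_div, abs_of_pos (mul_pos hZψ hZφ),
    div_le_div_iff₀ (mul_pos hZψ hZφ) hZψ]
  calc |(∫ a in A, ψ a ∂μ) * (∫ a in 𝒜, φ a ∂μ)
        - (∫ a in 𝒜, ψ a ∂μ) * (∫ a in A, φ a ∂μ)| * (∫ a in 𝒜, ψ a ∂μ)
      ≤ ((∫ a in 𝒜, |ψ a - φ a| ∂μ) * (∫ a in 𝒜, φ a ∂μ)) * (∫ a in 𝒜, ψ a ∂μ) :=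
        mul_le_mul_of_nonneg_right key hZψ.le
    _ = (∫ a in 𝒜, |ψ a - φ a| ∂μ) * ((∫ a in 𝒜, ψ a ∂μ) * (∫ a in 𝒜, φ a ∂μ)) := by ring

lemma abs_exp_sub_exp_le {x y K : ℝ} (hx : x ≤ K) (hy : y ≤ K) :
    |Real.exp x - Real.exp y| ≤ Real.exp K * |x - y| := by
  wlog h : y ≤ x generalizing x y
  · rw [abs_sub_comm, abs_sub_comm x y]; exact this hy hx (le_of_not_ge h)
  rw [abs_of_nonneg (sub_nonneg.2 (Real.exp_le_exp.2 h)), abs_of_nonneg (sub_nonneg.2 h)]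
  have h1 : Real.exp x - Real.exp y = Real.exp x * (1 - Real.exp (y - x)) := by
    rw [mul_sub, mul_one, ← Real.exp_add]; ring_nf
  have h2 : 1 - Real.exp (y - x) ≤ x - y := by
    have := Real.add_one_le_exp (y - x); linarith
  rw [h1]
  calc Real.exp x * (1 - Real.exp (y - x)) ≤ Real.exp x * (x - y) :=
        mul_le_mul_of_nonneg_left h2 (Real.exp_pos x).le
    _ ≤ Real.exp K * (x - y) :=
        mul_le_mul_of_nonneg_right (Real.exp_le_exp.2 hx) (by linarith)


theorem stmt10 {m d : ℕ}
    (𝒜 : Set (EuclideanSpace ℝ (Fin m)))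
    (h𝒜 : IsCompact 𝒜) (h𝒜0 : 0 < volume 𝒜) (h𝒜fin : volume 𝒜 < ⊤)
    (γ C B R : ℝ) (hγ : 0 < γ) (hC : 0 < C) (hB : 0 < B) (hR : 0 < R)
    (f g : EuclideanSpace ℝ (Fin m) → EuclideanSpace ℝ (Fin d))
    (r : EuclideanSpace ℝ (Fin m) → ℝ)
    (hf : Measurable f) (hg : Measurable g) (hr : Measurable r)
    (hfB : ∀ a ∈ 𝒜, ‖f a‖ ≤ B) (hgB : ∀ a ∈ 𝒜, ‖g a‖ ≤ B)
    (hrR : ∀ a ∈ 𝒜, |r a| ≤ R)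
    (z' : EuclideanSpace ℝ (Fin d)) (hz' : ‖z'‖ ≤ C) :
    dTV 𝒜 (gibbs 𝒜 γ g r z') (gibbs 𝒜 γ f r z') ≤
      1 / γ * Real.exp (2 * (B * C + R) / γ) *
        sSup ((fun a => |⟪f a - g a, z'⟫|) '' 𝒜) := by
  classical
  have h𝒜meas : MeasurableSet 𝒜 := h𝒜.isClosed.measurableSet
  have h𝒜ne : 𝒜.Nonempty := nonempty_of_measure_ne_zero h𝒜0.ne'
  obtain ⟨a0, ha0⟩ := h𝒜ne
  set V := (volume 𝒜).toReal with hVdef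
  have hVpos : 0 < V := ENNReal.toReal_pos h𝒜0.ne' h𝒜fin.ne
  set K := (B * C + R) / γ with hKdef
  set M := sSup ((fun a => |⟪f a - g a, z'⟫|) '' 𝒜) with hMdef
  have hMbdd : BddAbove ((fun a => |⟪f a - g a, z'⟫|) '' 𝒜) := by
    refine ⟨(B + B) * C, ?_⟩
    rintro _ ⟨a, ha, rfl⟩
    calc |⟪f a - g a, z'⟫| ≤ ‖f a - g a‖ * ‖z'‖ := abs_real_inner_le_norm _ _
      _ ≤ (B + B) * C := by
          refine mul_le_mul ?_ hz' (norm_nonneg _) (by linarith)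
          exact (norm_sub_le _ _).trans (add_le_add (hfB a ha) (hgB a ha))
  have hMle : ∀ a ∈ 𝒜, |⟪f a - g a, z'⟫| ≤ M := fun a ha =>
    le_csSup hMbdd ⟨a, ha, rfl⟩
  have hMnonneg : 0 ≤ M := (abs_nonneg _).trans (hMle a0 ha0)
  -- exponent bounds
  have hexp : ∀ (F : EuclideanSpace ℝ (Fin m) → EuclideanSpace ℝ (Fin d)),
      (∀ a ∈ 𝒜, ‖F a‖ ≤ B) → ∀ a ∈ 𝒜, |(⟪F a, z'⟫ + r a) / γ| ≤ K := by
    intro F hFB a ha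
    rw [abs_div, abs_of_pos hγ, hKdef]
    gcongr
    calc |⟪F a, z'⟫ + r a| ≤ |⟪F a, z'⟫| + |r a| := abs_add_le _ _
      _ ≤ B * C + R := add_le_add ((abs_real_inner_le_norm _ _).trans
            (mul_le_mul (hFB a ha) hz' (norm_nonneg _) hB.le)) (hrR a ha)
  set φ := fun a : EuclideanSpace ℝ (Fin m) => Real.exp ((⟪f a, z'⟫ + r a) / γ) with hφdef
  set ψ := fun a : EuclideanSpace ℝ (Fin m) => Real.exp ((⟪g a, z'⟫ + r a) / γ) with hψdef
  have hmφ : Measurable φ := (((hf.inner measurable_const).add hr).div_const γ).exp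
  have hmψ : Measurable ψ := (((hg.inner measurable_const).add hr).div_const γ).exp
  have hφ0 : ∀ a, 0 ≤ φ a := fun a => (Real.exp_pos _).le
  have hψ0 : ∀ a, 0 ≤ ψ a := fun a => (Real.exp_pos _).le
  have hφub : ∀ a ∈ 𝒜, φ a ≤ Real.exp K := fun a ha =>
    Real.exp_le_exp.2 (abs_le.1 (hexp f hfB a ha)).2
  have hψub : ∀ a ∈ 𝒜, ψ a ≤ Real.exp K := fun a ha =>
    Real.exp_le_exp.2 (abs_le.1 (hexp g hgB a ha)).2
  have hφlb : ∀ a ∈ 𝒜, Real.exp (-K) ≤ φ a := fun a ha =>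
    Real.exp_le_exp.2 (abs_le.1 (hexp f hfB a ha)).1
  have hψlb : ∀ a ∈ 𝒜, Real.exp (-K) ≤ ψ a := fun a ha =>
    Real.exp_le_exp.2 (abs_le.1 (hexp g hgB a ha)).1
  have hintφ : IntegrableOn φ 𝒜 volume := by
    apply Measure.integrableOn_of_bounded h𝒜fin.ne hmφ.aestronglyMeasurable (M := Real.exp K)
    filter_upwards [ae_restrict_mem h𝒜meas] with a ha
    rw [Real.norm_eq_abs, abs_of_pos (Real.exp_pos _)]
    exact hφub a ha
  have hintψ : IntegrableOn ψ 𝒜 volume := by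
    apply Measure.integrableOn_of_bounded h𝒜fin.ne hmψ.aestronglyMeasurable (M := Real.exp K)
    filter_upwards [ae_restrict_mem h𝒜meas] with a ha
    rw [Real.norm_eq_abs, abs_of_pos (Real.exp_pos _)]
    exact hψub a ha
  have hZφlb : V * Real.exp (-K) ≤ ∫ a in 𝒜, φ a := by
    have h := setIntegral_mono_on (integrableOn_const h𝒜fin.ne) hintφ h𝒜meas hφlb
    exact (by simpa [smul_eq_mul] using h : volume.real 𝒜 * Real.exp (-K) ≤ ∫ a in 𝒜, φ a)
  have hZψlb : V * Real.exp (-K) ≤ ∫ a in 𝒜, ψ a := by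
    have h := setIntegral_mono_on (integrableOn_const h𝒜fin.ne) hintψ h𝒜meas hψlb
    exact (by simpa [smul_eq_mul] using h : volume.real 𝒜 * Real.exp (-K) ≤ ∫ a in 𝒜, ψ a)
  have hZφpos : 0 < ∫ a in 𝒜, φ a := lt_of_lt_of_le (by positivity) hZφlb
  have hZψpos : 0 < ∫ a in 𝒜, ψ a := lt_of_lt_of_le (by positivity) hZψlb
  -- bound on the integral of |ψ - φ|
  have hdiff : ∀ a ∈ 𝒜, |ψ a - φ a| ≤ Real.exp K * (M / γ) := by
    intro a ha
    calc |ψ a - φ a|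
        ≤ Real.exp K * |(⟪g a, z'⟫ + r a) / γ - (⟪f a, z'⟫ + r a) / γ| :=
          abs_exp_sub_exp_le (abs_le.1 (hexp g hgB a ha)).2 (abs_le.1 (hexp f hfB a ha)).2
      _ ≤ Real.exp K * (M / γ) := by
          refine mul_le_mul_of_nonneg_left ?_ (Real.exp_pos K).le
          have heq : ⟪g a, z'⟫ + r a - (⟪f a, z'⟫ + r a) = -⟪f a - g a, z'⟫ := by
            rw [inner_sub_left]; ring
          rw [div_sub_div_same, abs_div, abs_of_pos hγ, heq, abs_neg]
          gcongr
          exact hMle a ha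
  have hintdiff : IntegrableOn (fun a => |ψ a - φ a|) 𝒜 volume := (hintψ.sub hintφ).abs
  have hIbound : ∫ a in 𝒜, |ψ a - φ a| ≤ V * (Real.exp K * (M / γ)) := by
    have h := setIntegral_mono_on hintdiff (integrableOn_const h𝒜fin.ne) h𝒜meas hdiff
    exact (by simpa [smul_eq_mul] using h :
      ∫ a in 𝒜, |ψ a - φ a| ≤ volume.real 𝒜 * (Real.exp K * (M / γ)))
  have hfinal : V * (Real.exp K * (M / γ)) / (V * Real.exp (-K)) =
      1 / γ * Real.exp (2 * (B * C + R) / γ) * M := by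
    rw [show 2 * (B * C + R) / γ = K + K by rw [hKdef]; ring, Real.exp_add, Real.exp_neg]
    have h1 : Real.exp K ≠ 0 := (Real.exp_pos K).ne'
    field_simp
  have hne : Nonempty {A : Set (EuclideanSpace ℝ (Fin m)) // MeasurableSet A ∧ A ⊆ 𝒜} :=
    ⟨⟨∅, MeasurableSet.empty, Set.empty_subset _⟩⟩
  rw [dTV]
  apply ciSup_le
  rintro ⟨A, hA, hA𝒜⟩
  simp only [gibbs]
  rw [integral_div, integral_div]
  calc |(∫ a in A, ψ a) / (∫ a in 𝒜, ψ a) - (∫ a in A, φ a) / (∫ a in 𝒜, φ a)|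
      ≤ (∫ a in 𝒜, |ψ a - φ a|) / (∫ a in 𝒜, ψ a) :=
        tv_bound volume 𝒜 A φ ψ h𝒜meas hA hA𝒜 hintφ hintψ hφ0 hψ0 hZφpos hZψpos
    _ ≤ V * (Real.exp K * (M / γ)) / (V * Real.exp (-K)) := by
        apply div_le_div₀ (by positivity) hIbound (by positivity) hZψlb
    _ = 1 / γ * Real.exp (2 * (B * C + R) / γ) * M := hfinal
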